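/- Let G be a locally finite simple graph satisfying CD(0,N) for some N ∈ (0,4). Then every vertex degree satisfies d_x ≤ 3N/(4-N). -/

import Mathlib

open Finset Filter Topology ENNReal SimpleGraph

noncomputable instance (priority := low) finLocFin {V : Type*} [Finite V] (G : SimpleGraph V) :
    G.LocallyFinite := fun _ => Fintype.ofFinite _

/-- Non-normalized graph Laplacian. -/
noncomputable def lap {V : Type*} (G : SimpleGraph V) [G.LocallyFinite] (f : V → ℝ) (x : V) : ℝ :=
  ∑ y ∈ G.neighborFinset x, (f y - f x)

/-- Bakry–Émery Γ operator. -/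
noncomputable def gam {V : Type*} (G : SimpleGraph V) [G.LocallyFinite] (f g : V → ℝ) (x : V) : ℝ :=
  (lap G (fun v => f v * g v) x - f x * lap G g x - g x * lap G f x) / 2

/-- Bakry–Émery Γ₂ operator. -/
noncomputable def gam2 {V : Type*} (G : SimpleGraph V) [G.LocallyFinite] (f g : V → ℝ) (x : V) : ℝ :=
  (lap G (gam G f g) x - gam G f (lap G g) x - gam G (lap G f) g x) / 2

/-- The coefficient 1/N for N ∈ (0,∞], with 1/∞ = 0. -/
noncomputable def invN (N : ℝ≥0∞) : ℝ := (N⁻¹).toReal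

/-- The vertex `x` satisfies the curvature-dimension inequality CD(K,N). -/
def CD {V : Type*} (G : SimpleGraph V) [G.LocallyFinite] (K : ℝ) (N : ℝ≥0∞) (x : V) : Prop :=
  ∀ f : V → ℝ, gam2 G f f x ≥ invN N * (lap G f x) ^ 2 + K * gam G f f x

theorem stmt_8 {V : Type*} (G : SimpleGraph V) [G.LocallyFinite]
    (N : ℝ) (hN : 0 < N) (hN4 : N < 4)
    (h : ∀ x : V, CD G 0 (ENNReal.ofReal N) x) :
    ∀ x : V, (G.degree x : ℝ) ≤ 3 * N / (4 - N) := by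
  classical
  intro x
  set d : ℝ := (G.degree x : ℝ) with hdd
  have hd0 : (0:ℝ) ≤ d := Nat.cast_nonneg _
  set f : V → ℝ := fun v => if v = x then 1 else 0 with hf
  have hfx : f x = 1 := by simp [hf]
  have hfy0 : ∀ y ∈ G.neighborFinset x, f y = 0 := by
    intro y hy
    have hne : y ≠ x := ((G.mem_neighborFinset x y).1 hy).ne'
    simp [hf, hne]
  have hcard : ((G.neighborFinset x).card : ℝ) = d := by
    rw [hdd, G.card_neighborFinset_eq_degree]
  -- sum of f over any neighborhood of a neighbor of x
  have hsum : ∀ y, G.Adj x y → ∑ z ∈ G.neighborFinset y, f z = 1 := by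
    intro y hxy
    rw [hf]
    rw [Finset.sum_ite_eq' (G.neighborFinset y) x (fun _ => (1:ℝ))]
    simp [G.mem_neighborFinset, hxy.symm]
  have hff : (fun v => f v * f v) = f := by
    funext v
    by_cases hv : v = x <;> simp [hf, hv]
  -- lap f at x
  have hlapfx : lap G f x = -d := by
    rw [lap, Finset.sum_congr rfl (fun y hy => by rw [hfy0 y hy, hfx])]
    simp [hcard, hdd]
  -- lap f at neighbors
  have hlapfy : ∀ y ∈ G.neighborFinset x, lap G f y = 1 := by
    intro y hy
    have hxy := (G.mem_neighborFinset x y).1 hy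
    rw [lap, Finset.sum_sub_distrib, hsum y hxy, hfy0 y hy]
    simp
  -- gam f f at x
  have hgamx : gam G f f x = d / 2 := by
    rw [gam, hff, hlapfx, hfx]; ring
  -- gam f f at neighbors
  have hgamy : ∀ y ∈ G.neighborFinset x, gam G f f y = 1 / 2 := by
    intro y hy
    rw [gam, hff, hlapfy y hy, hfy0 y hy]; ring
  -- lap (gam f f) at x
  have hlapgam : lap G (gam G f f) x = d * (1 - d) / 2 := by
    rw [lap, Finset.sum_congr rfl (fun y hy => by rw [hgamy y hy, hgamx])]
    rw [Finset.sum_const, nsmul_eq_mul, hcard]; ring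
  -- lap (lap f) at x
  have hlaplapfx : lap G (lap G f) x = d * (1 + d) := by
    rw [lap, Finset.sum_congr rfl (fun y hy => by rw [hlapfy y hy, hlapfx])]
    rw [Finset.sum_const, nsmul_eq_mul, hcard]; ring
  -- lap (f * lap f) at x
  have hlapmul : lap G (fun v => f v * lap G f v) x = d ^ 2 := by
    rw [lap, Finset.sum_congr rfl (fun y hy =>
      show f y * lap G f y - f x * lap G f x = d by rw [hfy0 y hy, hfx, hlapfx]; ring)]
    rw [Finset.sum_const, nsmul_eq_mul, hcard]; ring
  have hgamflf : gam G f (lap G f) x = -(d * (1 + d)) / 2 := by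
    rw [gam, hlapmul, hlaplapfx, hlapfx, hfx]; ring
  have hsymm : gam G (lap G f) f x = gam G f (lap G f) x := by
    simp only [gam, mul_comm]
    ring
  have hgam2 : gam2 G f f x = (3 * d + d ^ 2) / 4 := by
    rw [gam2, hlapgam, hsymm, hgamflf]; ring
  have hinv : invN (ENNReal.ofReal N) = N⁻¹ := by
    rw [invN, ← ENNReal.ofReal_inv_of_pos hN, ENNReal.toReal_ofReal (by positivity)]
  have key := h x f
  rw [hgam2, hlapfx, hinv] at key
  have hkey : N⁻¹ * d ^ 2 ≤ (3 * d + d ^ 2) / 4 := by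
    have : (-d) ^ 2 = d ^ 2 := by ring
    rw [this] at key
    linarith [key]
  have h4N : (0:ℝ) < 4 - N := by linarith
  rw [le_div_iff₀ h4N]
  have hNkey : N * (N⁻¹ * d ^ 2) ≤ N * ((3 * d + d ^ 2) / 4) :=
    mul_le_mul_of_nonneg_left hkey hN.le
  rw [← mul_assoc, mul_inv_cancel₀ hN.ne', one_mul] at hNkey
  rcases eq_or_lt_of_le hd0 with hdz | hdpos
  · rw [← hdz]; nlinarith
  · nlinarith [mul_pos hdpos hdpos]
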